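/- Let E be a digraph on Fin N and let Ē := Relation.TransGen E be its transitive closure. Then the ℝ-submodule Submodule.span ℝ {M | ∃ i j, Ē i j ∧ M = A i j} of Matrix (Fin N) (Fin N) ℝ is closed under the commutator bracket: for all M, M' in this submodule, ⁅M, M'⁆ = M * M' - M' * M also lies in it. -/

import Mathlib

/-- The negative of the Laplacian of the single-edge digraph `i → j`. -/
def edgeMatrix {N : ℕ} (i j : Fin N) : Matrix (Fin N) (Fin N) ℝ :=
  Matrix.single i j 1 - Matrix.single i i 1

section
attribute [local instance] LieRing.ofAssociativeRing

lemma edgeMatrix_self {N : ℕ} (i : Fin N) : edgeMatrix i i = 0 := by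
  simp [edgeMatrix]

lemma edge_mem {N : ℕ} (T : Fin N → Fin N → Prop) {i j : Fin N} (h : T i j) :
    edgeMatrix i j ∈ Submodule.span ℝ {B | ∃ i j, T i j ∧ B = edgeMatrix i j} :=
  Submodule.subset_span ⟨i, j, h, rfl⟩

lemma key_bracket {N : ℕ} (T : Fin N → Fin N → Prop) (hT : Transitive T)
    {i j k l : Fin N} (hij : T i j) (hkl : T k l) :
    ⁅edgeMatrix i j, edgeMatrix k l⁆ ∈
      Submodule.span ℝ {B | ∃ i j, T i j ∧ B = edgeMatrix i j} := by
  by_cases hik : i = k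
  · subst hik
    by_cases hji : j = i
    · subst hji
      erw [edgeMatrix_self, zero_lie]
      exact Submodule.zero_mem _
    · by_cases hli : l = i
      · subst hli
        erw [edgeMatrix_self, lie_zero]
        exact Submodule.zero_mem _
      · have h : ⁅edgeMatrix i j, edgeMatrix i l⁆ = edgeMatrix i j - edgeMatrix i l := by
          simp [edgeMatrix, Ring.lie_def, sub_mul, mul_sub,
            Matrix.single_mul_single_same, Matrix.single_mul_single_of_ne,
            hji, hli, Ne.symm hji, Ne.symm hli]
          try abel
        rw [h]
        exact sub_mem (edge_mem T hij) (edge_mem T hkl)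
  · by_cases hjk : j = k
    · by_cases hli : l = i
      · have h : ⁅edgeMatrix i j, edgeMatrix k l⁆ = edgeMatrix k l - edgeMatrix i j := by
          simp [edgeMatrix, Ring.lie_def, sub_mul, mul_sub,
            Matrix.single_mul_single_same, Matrix.single_mul_single_of_ne,
            hjk, hli, hik, Ne.symm hik]
          try abel
        rw [h]
        exact sub_mem (edge_mem T hkl) (edge_mem T hij)
      · have h : ⁅edgeMatrix i j, edgeMatrix k l⁆ = edgeMatrix i l - edgeMatrix i j := by
          simp [edgeMatrix, Ring.lie_def, sub_mul, mul_sub,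
            Matrix.single_mul_single_same, Matrix.single_mul_single_of_ne,
            hjk, hik, hli, Ne.symm hik, Ne.symm hli]
          try abel
        rw [h]
        exact sub_mem (edge_mem T (hT hij (hjk.symm ▸ hkl))) (edge_mem T hij)
    · by_cases hli : l = i
      · have h : ⁅edgeMatrix i j, edgeMatrix k l⁆ = edgeMatrix k l - edgeMatrix k j := by
          simp [edgeMatrix, Ring.lie_def, sub_mul, mul_sub,
            Matrix.single_mul_single_same, Matrix.single_mul_single_of_ne,
            hli, hik, hjk, Ne.symm hik, Ne.symm hjk]
          try abel
        rw [h]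
        exact sub_mem (edge_mem T hkl) (edge_mem T (hT (hli ▸ hkl) hij))
      · have h : ⁅edgeMatrix i j, edgeMatrix k l⁆ = 0 := by
          simp [edgeMatrix, Ring.lie_def, sub_mul, mul_sub,
            Matrix.single_mul_single_same, Matrix.single_mul_single_of_ne,
            hik, hjk, hli, Ne.symm hik, Ne.symm hjk, Ne.symm hli]
        rw [h]
        exact Submodule.zero_mem _

end

theorem span_transClosure_closed_under_bracket {N : ℕ} (E : Fin N → Fin N → Prop)
    (M M' : Matrix (Fin N) (Fin N) ℝ)
    (hM : M ∈ Submodule.span ℝ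
      {B | ∃ i j, Relation.TransGen E i j ∧ B = edgeMatrix i j})
    (hM' : M' ∈ Submodule.span ℝ
      {B | ∃ i j, Relation.TransGen E i j ∧ B = edgeMatrix i j}) :
    ⁅M, M'⁆ ∈ Submodule.span ℝ
      {B | ∃ i j, Relation.TransGen E i j ∧ B = edgeMatrix i j} := by
  letI : LieRing (Matrix (Fin N) (Fin N) ℝ) := LieRing.ofAssociativeRing
  set S := Submodule.span ℝ {B | ∃ i j, Relation.TransGen E i j ∧ B = edgeMatrix i j} with hS
  induction hM using Submodule.span_induction with
  | mem x hx =>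
    induction hM' using Submodule.span_induction with
    | mem y hy =>
      obtain ⟨i, j, hij, rfl⟩ := hx
      obtain ⟨k, l, hkl, rfl⟩ := hy
      exact key_bracket _ (fun _ _ _ => Relation.TransGen.trans) hij hkl
    | zero => erw [lie_zero]; exact Submodule.zero_mem _
    | add y z _ _ hy hz => erw [lie_add]; exact add_mem hy hz
    | smul r y _ hy => erw [lie_smul]; exact Submodule.smul_mem _ r hy
  | zero => erw [zero_lie]; exact Submodule.zero_mem _
  | add y z _ _ hy hz => erw [add_lie]; exact add_mem hy hz
  | smul r y _ hy => erw [smul_lie]; exact Submodule.smul_mem _ r hy
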